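/- For every n ≥ 1, the number of permutations π ∈ S_n that avoid the generalized pattern 3-21 and satisfy π_n = n equals the Bell number B_{n-1}; and for every k with 1 ≤ k ≤ n-1, the number of permutations π ∈ S_n that avoid 3-21 and satisfy π_n = k equals ∇^{n-k-1}(B_{n-1}) = Σ_{i=0}^{n-k-1} (-1)^i · C(n-k-1, i) · B_{n-1-i}. -/

import Mathlib

/-- `π` avoids the generalized pattern 3-21. -/
def Avoids3d21 {n : ℕ} (π : Equiv.Perm (Fin n)) : Prop :=
  ¬ ∃ (i j : Fin n) (h : j.1 + 1 < n), i < j ∧ π ⟨j.1 + 1, h⟩ < π j ∧ π j < π i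

/-- The `m`-th Bell number: the number of partitions of a set with `m` elements,
equivalently the number of equivalence relations (setoids) on `Fin m`. -/
noncomputable def bell (m : ℕ) : ℕ := Nat.card (Setoid (Fin m))

open Finset Equiv

instance finiteSetoid (α : Type*) [Finite α] : Finite (Setoid α) := by
  have : Function.Injective (fun s : Setoid α => s.r) := by
    intro a b h
    exact Setoid.ext fun x y => iff_of_eq (congrFun (congrFun h x) y)
  exact Finite.of_injective _ this

/-- Transport of setoids along an equiv. -/
def setoidCongr {α β : Type*} (e : α ≃ β) : Setoid α ≃ Setoid β where
  toFun r := Setoid.comap e.symm r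
  invFun r := Setoid.comap e r
  left_inv r := Setoid.ext fun x y => by
    simp [Setoid.comap_rel]
  right_inv r := Setoid.ext fun x y => by
    simp [Setoid.comap_rel]

lemma nat_card_setoid_congr {α β : Type*} (e : α ≃ β) :
    Nat.card (Setoid α) = Nat.card (Setoid β) := Nat.card_congr (setoidCongr e)

lemma nat_card_sigma {ι : Type*} [Fintype ι] (G : ι → Type*) [∀ i, Finite (G i)] :
    Nat.card (Σ i, G i) = ∑ i, Nat.card (G i) := by
  have := fun i => Fintype.ofFinite (G i)
  rw [Nat.card_eq_fintype_card, Fintype.card_sigma]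
  exact Finset.sum_congr rfl fun i _ => (Nat.card_eq_fintype_card).symm

section BellRec
open scoped Classical

variable {m : ℕ}

/-- the block of the last element (as a subset of `Fin m`). -/
noncomputable def blk (m : ℕ) (r : Setoid (Fin (m+1))) : Finset (Fin m) :=
  Finset.univ.filter (fun x => r x.castSucc (Fin.last m))

noncomputable def fdef (s : Finset (Fin m)) (t : Setoid {x : Fin m // x ∉ s}) :
    Fin (m+1) → Option (Quotient t) :=
  Fin.lastCases none (fun y => if h : y ∈ s then none else some (Quotient.mk t ⟨y, h⟩))

lemma fdef_last (s : Finset (Fin m)) (t : Setoid {x : Fin m // x ∉ s}) :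
    fdef s t (Fin.last m) = none := by simp [fdef]

lemma fdef_castSucc (s : Finset (Fin m)) (t : Setoid {x : Fin m // x ∉ s}) (y : Fin m) :
    fdef s t y.castSucc = if h : y ∈ s then none else some (Quotient.mk t ⟨y, h⟩) := by
  simp [fdef]

noncomputable def fiberEquiv (s : Finset (Fin m)) :
    {r : Setoid (Fin (m+1)) // blk m r = s} ≃ Setoid {x : Fin m // x ∉ s} where
  toFun r := Setoid.comap (fun x => Fin.castSucc x.1) r.1
  invFun t := ⟨Setoid.ker (fdef s t), by
    ext x
    simp only [blk, Finset.mem_filter, Finset.mem_univ, true_and]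
    change fdef s t x.castSucc = fdef s t (Fin.last m) ↔ _
    rw [fdef_last, fdef_castSucc]
    split <;> simp_all⟩
  left_inv := by
    rintro ⟨r, hr⟩
    have hmem : ∀ x : Fin m, x ∈ s ↔ r x.castSucc (Fin.last m) := by
      intro x; rw [← hr]; simp [blk]
    ext1
    refine Setoid.ext fun x y => ?_
    change fdef s _ x = fdef s _ y ↔ r x y
    induction x using Fin.lastCases with
    | last =>
      induction y using Fin.lastCases with
      | last => exact iff_of_true (by rw [fdef_last]) (r.refl _)
      | cast y =>
        rw [fdef_last, fdef_castSucc]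
        by_cases h : y ∈ s
        · rw [dif_pos h]
          exact iff_of_true rfl (r.symm' ((hmem y).1 h))
        · rw [dif_neg h]
          refine iff_of_false (by simp) fun hr' => h ((hmem y).2 (r.symm' hr'))
    | cast x =>
      induction y using Fin.lastCases with
      | last =>
        rw [fdef_last, fdef_castSucc]
        by_cases h : x ∈ s
        · rw [dif_pos h]
          exact iff_of_true rfl ((hmem x).1 h)
        · rw [dif_neg h]
          refine iff_of_false (by simp) fun hr' => h ((hmem x).2 hr')
      | cast y =>
        rw [fdef_castSucc, fdef_castSucc]
        by_cases hx : x ∈ s <;> by_cases hy : y ∈ s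
        · rw [dif_pos hx, dif_pos hy]
          exact iff_of_true rfl (r.trans' ((hmem x).1 hx) (r.symm' ((hmem y).1 hy)))
        · rw [dif_pos hx, dif_neg hy]
          refine iff_of_false (by simp) fun hr' =>
            hy ((hmem y).2 (r.trans' (r.symm' hr') ((hmem x).1 hx)))
        · rw [dif_neg hx, dif_pos hy]
          refine iff_of_false (by simp) fun hr' =>
            hx ((hmem x).2 (r.trans' hr' ((hmem y).1 hy)))
        · rw [dif_neg hx, dif_neg hy]
          simp only [Option.some.injEq]
          rw [Quotient.eq]
          exact Iff.rfl
  right_inv := by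
    intro t
    refine Setoid.ext fun x y => ?_
    change fdef s t x.1.castSucc = fdef s t y.1.castSucc ↔ t x y
    rw [fdef_castSucc, fdef_castSucc, dif_neg x.2, dif_neg y.2]
    simp only [Option.some.injEq]
    rw [Quotient.eq]

lemma bell_succ (m : ℕ) :
    bell (m+1) = ∑ i ∈ Finset.range (m+1), (m.choose i) * bell (m - i) := by
  have h1 : bell (m+1) = ∑ s : Finset (Fin m), Nat.card {r : Setoid (Fin (m+1)) // blk m r = s} := by
    rw [bell, ← nat_card_sigma, Nat.card_congr (Equiv.sigmaFiberEquiv (blk m))]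
  have h2 : ∀ s : Finset (Fin m), Nat.card {r : Setoid (Fin (m+1)) // blk m r = s}
      = bell (m - s.card) := by
    intro s
    rw [Nat.card_congr (fiberEquiv s), bell]
    refine nat_card_setoid_congr ?_
    have hc : Fintype.card {x : Fin m // x ∉ s} = m - s.card := by
      rw [Fintype.card_subtype_compl]
      simp
    exact (Fintype.equivFinOfCardEq hc)
  rw [h1]
  calc ∑ s : Finset (Fin m), Nat.card {r : Setoid (Fin (m+1)) // blk m r = s}
      = ∑ s ∈ (Finset.univ : Finset (Fin m)).powerset, bell (m - s.card) := by
        rw [Finset.powerset_univ]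
        exact Finset.sum_congr rfl fun s _ => h2 s
    _ = ∑ i ∈ Finset.range (m+1), (m.choose i) * bell (m - i) := by
        rw [Finset.sum_powerset_apply_card (fun c => bell (m - c))]
        simp [Finset.card_univ, smul_eq_mul]

end BellRec

variable {m : ℕ}

lemma succAbove_val (p : Fin (m+2)) (j : Fin (m+1)) :
    ((p.succAbove j : Fin (m+2)) : ℕ) = if (j:ℕ) < (p:ℕ) then (j:ℕ) else (j:ℕ)+1 := by
  rw [Fin.succAbove]
  by_cases h : (j : ℕ) < (p : ℕ)
  · rw [if_pos h, if_pos (by simpa [Fin.lt_def] using h)]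
    simp
  · rw [if_neg h, if_neg (by simpa [Fin.lt_def] using h)]
    simp

def toPerm (p : Fin (m+2)) (σ : Equiv.Perm (Fin (m+1))) : Equiv.Perm (Fin (m+2)) :=
  (finSuccEquiv' (Fin.last (m+1))).trans ((σ.optionCongr).trans (finSuccEquiv' p).symm)

lemma toPerm_last (p : Fin (m+2)) (σ : Equiv.Perm (Fin (m+1))) :
    toPerm p σ (Fin.last (m+1)) = p := by
  simp [toPerm, finSuccEquiv'_at, finSuccEquiv'_symm_none]

lemma toPerm_castSucc (p : Fin (m+2)) (σ : Equiv.Perm (Fin (m+1))) (i : Fin (m+1)) :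
    toPerm p σ i.castSucc = p.succAbove (σ i) := by
  have h1 : finSuccEquiv' (Fin.last (m+1)) i.castSucc = some i := by
    rw [← Fin.succAbove_last, finSuccEquiv'_succAbove]
  simp [toPerm, h1, finSuccEquiv'_symm_some]

lemma perm_ext_last (π₁ π₂ : Equiv.Perm (Fin (m+2)))
    (h1 : π₁ (Fin.last (m+1)) = π₂ (Fin.last (m+1)))
    (h2 : ∀ i : Fin (m+1), π₁ i.castSucc = π₂ i.castSucc) : π₁ = π₂ :=
  Equiv.ext (Fin.lastCases h1 h2)

def delPerm (π : Equiv.Perm (Fin (m+2))) (p : Fin (m+2)) : Equiv.Perm (Fin (m+1)) :=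
  Equiv.removeNone ((finSuccEquiv' (Fin.last (m+1))).symm.trans (π.trans (finSuccEquiv' p)))

lemma delPerm_spec (π : Equiv.Perm (Fin (m+2))) (p : Fin (m+2))
    (h : π (Fin.last (m+1)) = p) (i : Fin (m+1)) :
    π i.castSucc = p.succAbove (delPerm π p i) := by
  set e := (finSuccEquiv' (Fin.last (m+1))).symm.trans (π.trans (finSuccEquiv' p)) with he
  have hcs : (finSuccEquiv' (Fin.last (m+1))).symm (some i) = i.castSucc := by
    rw [finSuccEquiv'_symm_some, Fin.succAbove_last]
  have hval : e (some i) = finSuccEquiv' p (π i.castSucc) := by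
    simp [he, Equiv.trans_apply, hcs]
  have hne : π i.castSucc ≠ p := by
    rw [← h]
    intro hc
    exact (Fin.ne_last_of_lt (Fin.castSucc_lt_last i)) (π.injective hc)
  have hsome : ∃ x', e (some i) = some x' := by
    have hnn : e (some i) ≠ none := by
      rw [hval]
      intro hc
      have := congrArg (finSuccEquiv' p).symm hc
      rw [Equiv.symm_apply_apply, finSuccEquiv'_symm_none] at this
      exact hne this
    exact Option.ne_none_iff_exists'.1 hnn
  have h2 : some (delPerm π p i) = e (some i) := Equiv.removeNone_some e hsome
  rw [hval] at h2
  have := congrArg (finSuccEquiv' p).symm h2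
  rw [finSuccEquiv'_symm_some, Equiv.symm_apply_apply] at this
  exact this.symm

def Qcond (m : ℕ) (p : Fin (m+2)) (σ : Equiv.Perm (Fin (m+1))) : Prop :=
  ((σ (Fin.last m) : Fin (m+1)) : ℕ) < (p : ℕ) ∨ σ (Fin.last m) = Fin.last m

lemma avoids_iff (π : Equiv.Perm (Fin (m+2))) (p : Fin (m+2)) (σ : Equiv.Perm (Fin (m+1)))
    (hlast : π (Fin.last (m+1)) = p)
    (H : ∀ i : Fin (m+1), π i.castSucc = p.succAbove (σ i)) :
    Avoids3d21 π ↔ Avoids3d21 σ ∧ Qcond m p σ := by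
  have hq : ((Fin.last m).castSucc : Fin (m+2)) = ⟨m, by omega⟩ := rfl
  constructor
  · intro hπ
    constructor
    · rintro ⟨i, j, h, hij, h1, h2⟩
      apply hπ
      refine ⟨i.castSucc, j.castSucc, by simp; exact Nat.le_of_lt_succ j.is_lt, Fin.castSucc_lt_castSucc_iff.mpr hij, ?_, ?_⟩
      · show π ((⟨j.1 + 1, h⟩ : Fin (m+1)).castSucc) < π j.castSucc
        rw [H, H]
        exact Fin.succAbove_lt_succAbove_iff.mpr h1
      · rw [H, H]
        exact Fin.succAbove_lt_succAbove_iff.mpr h2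
    · by_contra hq'
      rw [Qcond, not_or] at hq'
      obtain ⟨hq1, hq2⟩ := hq'
      push_neg at hq1
      have hσm : ((σ (Fin.last m) : Fin (m+1)) : ℕ) < m := by
        have h1 : ((σ (Fin.last m) : Fin (m+1)) : ℕ) < m + 1 := (σ (Fin.last m)).is_lt
        have h2 : ((σ (Fin.last m) : Fin (m+1)) : ℕ) ≠ m := by
          intro hc; exact hq2 (Fin.ext hc)
        omega
      have hp : (p : ℕ) < m + 1 := by
        have := (σ (Fin.last m)).is_lt
        omega
      -- value at position q = castSucc (last m)
      have hπq : (π (Fin.last m).castSucc : ℕ) = ((σ (Fin.last m) : Fin (m+1)) : ℕ) + 1 := by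
        rw [H, succAbove_val, if_neg (by omega)]
      set t := π.symm (Fin.last (m+1)) with ht
      have hπt : π t = Fin.last (m+1) := π.apply_symm_apply _
      have htlt : (t : ℕ) < m := by
        have h1 : t ≠ Fin.last (m+1) := by
          intro hc
          rw [hc, hlast] at hπt
          rw [hπt, Fin.val_last] at hp
          omega
        have h2 : t ≠ (Fin.last m).castSucc := by
          intro hc
          rw [hc] at hπt
          have := congrArg (Fin.val) hπt
          rw [hπq, Fin.val_last] at this
          omega
        have h3 : (t : ℕ) < m + 2 := t.is_lt
        have h4 : (t : ℕ) ≠ m + 1 := fun hc => h1 (Fin.ext hc)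
        have h5 : (t : ℕ) ≠ m := fun hc => h2 (Fin.ext (by simpa using hc))
        omega
      apply hπ
      refine ⟨t, (Fin.last m).castSucc, by simp, ?_, ?_, ?_⟩
      · rw [Fin.lt_def]; simpa using htlt
      · show π (Fin.last (m+1)) < π ((Fin.last m).castSucc)
        rw [hlast, Fin.lt_def, hπq]
        omega
      · rw [hπt, Fin.lt_def, hπq, Fin.val_last]
        omega
  · rintro ⟨hσ, hQ⟩ ⟨i, j, h, hij, h1, h2⟩
    have hj2 : (j : ℕ) ≤ m := by omega
    rcases eq_or_lt_of_le hj2 with hjm | hjm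
    · -- j is the second-to-last position
      have hjq : j = (Fin.last m).castSucc := Fin.ext (by simpa using hjm)
      have hilt : (i : ℕ) < m := by
        have := Fin.lt_def.mp hij
        rw [hjq] at this
        simpa using this
      have hidx : (⟨(j : ℕ) + 1, h⟩ : Fin (m+2)) = Fin.last (m+1) := by
        apply Fin.ext; simp [hjm]
      rw [hidx, hlast] at h1
      rw [hjq] at h1 h2
      have hπq : (π (Fin.last m).castSucc : ℕ)
          = if ((σ (Fin.last m) : Fin (m+1)) : ℕ) < (p : ℕ)
            then ((σ (Fin.last m) : Fin (m+1)) : ℕ)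
            else ((σ (Fin.last m) : Fin (m+1)) : ℕ) + 1 := by
        rw [H, succAbove_val]
      rcases hQ with hlt | heq
      · rw [Fin.lt_def, hπq, if_pos hlt] at h1
        omega
      · rw [heq] at hπq
        simp only [Fin.val_last] at hπq
        by_cases hpm : (p : ℕ) < m + 1
        · -- π q = last, contradicts h2
          have : (π (Fin.last m).castSucc : ℕ) = m + 1 := by
            rw [hπq, if_neg (by omega)]
          have h2' := Fin.lt_def.mp h2
          have : (π i : ℕ) < m + 2 := (π i).is_lt
          omega
        · -- p = last, contradicts h1
          have hp2 : (p : ℕ) = m + 1 := by have := p.is_lt; omega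
          have : (π (Fin.last m).castSucc : ℕ) = m := by
            rw [hπq, if_pos (by omega)]
          have h1' := Fin.lt_def.mp h1
          omega
    · -- j is an earlier position; reduce to σ
      have him : (i : ℕ) < m + 1 := by have := Fin.lt_def.mp hij; omega
      have hjm1 : (j : ℕ) < m + 1 := by omega
      have hjp1 : (j : ℕ) + 1 < m + 1 := by omega
      have hA : π j = p.succAbove (σ ⟨j, hjm1⟩) := H ⟨(j:ℕ), hjm1⟩
      have hB : π ⟨(j:ℕ)+1, h⟩ = p.succAbove (σ ⟨(j:ℕ)+1, hjp1⟩) := H ⟨(j:ℕ)+1, hjp1⟩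
      have hC : π i = p.succAbove (σ ⟨i, him⟩) := H ⟨(i:ℕ), him⟩
      rw [hA, hB] at h1
      rw [hA, hC] at h2
      apply hσ
      exact ⟨⟨i, him⟩, ⟨j, hjm1⟩, hjp1, Fin.lt_def.mpr (Fin.lt_def.mp hij),
        Fin.succAbove_lt_succAbove_iff.mp h1, Fin.succAbove_lt_succAbove_iff.mp h2⟩

noncomputable def cnt (m : ℕ) (k : Fin (m+1)) : ℕ :=
  Nat.card {π : Equiv.Perm (Fin (m+1)) // Avoids3d21 π ∧ π (Fin.last m) = k}

def permEquiv (p : Fin (m+2)) :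
    {π : Equiv.Perm (Fin (m+2)) // Avoids3d21 π ∧ π (Fin.last (m+1)) = p} ≃
    {σ : Equiv.Perm (Fin (m+1)) // Avoids3d21 σ ∧ Qcond m p σ} where
  toFun x := ⟨delPerm x.1 p, (avoids_iff x.1 p _ x.2.2 (delPerm_spec x.1 p x.2.2)).1 x.2.1⟩
  invFun y := ⟨toPerm p y.1,
    ((avoids_iff _ p y.1 (toPerm_last p y.1) (toPerm_castSucc p y.1)).2 y.2 : Avoids3d21 _),
    toPerm_last p y.1⟩
  left_inv x := Subtype.ext (perm_ext_last _ _
    (by rw [toPerm_last, x.2.2])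
    (fun i => by rw [toPerm_castSucc, ← delPerm_spec x.1 p x.2.2]))
  right_inv y := Subtype.ext (Equiv.ext fun i => by
    have h1 := delPerm_spec (toPerm p y.1) p (toPerm_last p y.1) i
    rw [toPerm_castSucc] at h1
    exact (Fin.succAbove_right_injective (p := p) h1.symm))

lemma nat_card_sigma' {ι : Type*} [Fintype ι] (G : ι → Type*) [∀ i, Finite (G i)] :
    Nat.card (Σ i, G i) = ∑ i, Nat.card (G i) := by
  have := fun i => Fintype.ofFinite (G i)
  rw [Nat.card_eq_fintype_card, Fintype.card_sigma]
  exact Finset.sum_congr rfl fun i _ => (Nat.card_eq_fintype_card).symm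

lemma cnt_succ (m : ℕ) (k : Fin (m+2)) :
    cnt (m+1) k = ∑ j ∈ Finset.univ.filter
      (fun j : Fin (m+1) => (j:ℕ) < (k:ℕ) ∨ j = Fin.last m), cnt m j := by
  classical
  rw [cnt, Nat.card_congr (permEquiv k)]
  set S := Finset.univ.filter (fun j : Fin (m+1) => (j:ℕ) < (k:ℕ) ∨ j = Fin.last m) with hS
  have hmem : ∀ σ : Equiv.Perm (Fin (m+1)), Qcond m k σ ↔ σ (Fin.last m) ∈ S := by
    intro σ; simp [hS, Qcond]
  set f : {σ : Equiv.Perm (Fin (m+1)) // Avoids3d21 σ ∧ Qcond m k σ} → {j : Fin (m+1) // j ∈ S} :=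
    fun x => ⟨x.1 (Fin.last m), (hmem x.1).1 x.2.2⟩ with hf
  rw [← Nat.card_congr (Equiv.sigmaFiberEquiv f), nat_card_sigma']
  have hfib : ∀ j : {j : Fin (m+1) // j ∈ S},
      Nat.card {x // f x = j} = cnt m j.1 := by
    intro j
    rw [cnt]
    refine Nat.card_congr ?_
    refine ⟨fun z => ⟨z.1.1, z.1.2.1, congrArg Subtype.val z.2⟩,
      fun w => ⟨⟨w.1, w.2.1, (hmem w.1).2 (by rw [w.2.2]; exact j.2)⟩, Subtype.ext w.2.2⟩,
      fun z => Subtype.ext (Subtype.ext rfl), fun w => Subtype.ext rfl⟩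
  rw [Finset.sum_congr rfl (fun j _ => hfib j)]
  exact Finset.sum_coe_sort S (fun j => cnt m j)
section Arith

noncomputable def dd (M j : ℕ) : ℤ :=
  ∑ i ∈ Finset.range (j+1), (-1)^i * (j.choose i) * (bell (M - i) : ℤ)

lemma dd_zero (M : ℕ) : dd M 0 = (bell M : ℤ) := by simp [dd]

lemma bell_succ' (t : ℕ) : bell (t+1) = ∑ s ∈ Finset.range (t+1), t.choose s * bell s := by
  rw [bell_succ]
  rw [← Finset.sum_range_reflect (fun s => t.choose s * bell s) (t+1)]
  refine Finset.sum_congr rfl fun i hi => ?_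
  rw [Finset.mem_range] at hi
  have h1 : t + 1 - 1 - i = t - i := by omega
  rw [h1, Nat.choose_symm (by omega)]

lemma choose_swap (m i j : ℕ) : m.choose i * (m-i).choose j = m.choose j * (m-j).choose i := by
  rcases le_or_gt (i+j) m with hm | hm
  · have e1 := Nat.choose_mul (n := m) (Nat.le_add_right i j)
    have e2 := Nat.choose_mul (n := m) (Nat.le_add_right j i)
    rw [Nat.add_sub_cancel_left] at e1 e2
    have e3 : (i+j).choose i = (j+i).choose j := by
      rw [Nat.add_comm j i]
      rw [← Nat.choose_symm (Nat.le_add_right i j)]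
      congr 1
      omega
    rw [← e1, ← e2, Nat.add_comm j i, e3, Nat.add_comm j i]
  · have h1 : m.choose i * (m-i).choose j = 0 := by
      rcases le_or_gt i m with h | h
      · rw [Nat.choose_eq_zero_of_lt (show m - i < j by omega), mul_zero]
      · rw [Nat.choose_eq_zero_of_lt h, zero_mul]
    have h2 : m.choose j * (m-j).choose i = 0 := by
      rcases le_or_gt j m with h | h
      · rw [Nat.choose_eq_zero_of_lt (show m - j < i by omega), mul_zero]
      · rw [Nat.choose_eq_zero_of_lt h, zero_mul]
    rw [h1, h2]

lemma dd_key (m : ℕ) : dd (m+1) m = (bell m : ℤ) := by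
  rw [dd]
  have step1 : ∀ i ∈ Finset.range (m+1),
      (-1:ℤ)^i * (m.choose i) * (bell (m+1-i) : ℤ)
      = ∑ s ∈ Finset.range (m+1),
          (-1:ℤ)^i * (m.choose i) * ((m-i).choose s) * (bell s : ℤ) := by
    intro i hi
    rw [Finset.mem_range] at hi
    have h1 : m + 1 - i = (m - i) + 1 := by omega
    rw [h1, bell_succ' (m - i)]
    have h2 : ∑ s ∈ Finset.range (m-i+1),
          (-1:ℤ)^i * (m.choose i) * ((m-i).choose s) * (bell s : ℤ)
        = ∑ s ∈ Finset.range (m+1),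
          (-1:ℤ)^i * (m.choose i) * ((m-i).choose s) * (bell s : ℤ) := by
      refine Finset.sum_subset (Finset.range_subset_range.mpr (by omega)) ?_
      intro s hs hns
      rw [Finset.mem_range] at hs hns
      rw [Nat.choose_eq_zero_of_lt (show m - i < s by omega)]
      simp
    push_cast
    rw [← h2, Finset.mul_sum]
    exact Finset.sum_congr rfl fun s _ => by ring
  rw [Finset.sum_congr rfl step1, Finset.sum_comm]
  have step2 : ∀ s ∈ Finset.range (m+1),
      (∑ i ∈ Finset.range (m+1), (-1:ℤ)^i * (m.choose i) * ((m-i).choose s) * (bell s : ℤ))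
      = (m.choose s : ℤ) * (bell s : ℤ) * (if m - s = 0 then 1 else 0) := by
    intro s hs
    rw [Finset.mem_range] at hs
    have h3 : ∀ i ∈ Finset.range (m+1),
        (-1:ℤ)^i * (m.choose i) * ((m-i).choose s) * (bell s : ℤ)
        = (m.choose s : ℤ) * (bell s : ℤ) * ((-1:ℤ)^i * ((m-s).choose i)) := by
      intro i _
      have := choose_swap m i s
      have hc : ((m.choose i : ℤ)) * ((m-i).choose s : ℤ) = (m.choose s : ℤ) * ((m-s).choose i : ℤ) := by
        exact_mod_cast congrArg (Nat.cast (R := ℤ)) this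
      calc (-1:ℤ)^i * (m.choose i) * ((m-i).choose s) * (bell s : ℤ)
          = (-1:ℤ)^i * ((m.choose i : ℤ) * ((m-i).choose s : ℤ)) * (bell s : ℤ) := by ring
        _ = (-1:ℤ)^i * ((m.choose s : ℤ) * ((m-s).choose i : ℤ)) * (bell s : ℤ) := by rw [hc]
        _ = (m.choose s : ℤ) * (bell s : ℤ) * ((-1:ℤ)^i * ((m-s).choose i)) := by ring
    rw [Finset.sum_congr rfl h3, ← Finset.mul_sum]
    congr 1
    have h4 : ∑ i ∈ Finset.range (m-s+1), (-1:ℤ)^i * ((m-s).choose i)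
        = ∑ i ∈ Finset.range (m+1), (-1:ℤ)^i * ((m-s).choose i) := by
      refine Finset.sum_subset (Finset.range_subset_range.mpr (by omega)) ?_
      intro x hx hnx
      rw [Finset.mem_range] at hx hnx
      rw [Nat.choose_eq_zero_of_lt (show m - s < x by omega)]
      simp
    rw [← h4, Int.alternating_sum_range_choose]
  rw [Finset.sum_congr rfl step2]
  rw [Finset.sum_eq_single m]
  · simp
  · intro s hs hne
    rw [Finset.mem_range] at hs
    rw [if_neg (by omega), mul_zero]
  · intro h
    exact absurd (Finset.self_mem_range_succ m) h

lemma dd_succ (M j : ℕ) : dd M (j+1) = dd M j - dd (M-1) j := by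
  rw [dd, Finset.sum_range_succ' _ (j+1)]
  have hterm : ∀ i ∈ Finset.range (j+1),
      (-1:ℤ)^(i+1) * ((j+1).choose (i+1)) * (bell (M - (i+1)) : ℤ)
      = (-1:ℤ)^(i+1) * (j.choose (i+1)) * (bell (M - (i+1)) : ℤ)
        - (-1:ℤ)^i * (j.choose i) * (bell (M - 1 - i) : ℤ) := by
    intro i _
    have h1 : (j+1).choose (i+1) = j.choose i + j.choose (i+1) := Nat.choose_succ_succ j i
    have h2 : M - (i+1) = M - 1 - i := by omega
    rw [h1, h2]
    push_cast
    ring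
  rw [Finset.sum_congr rfl hterm, Finset.sum_sub_distrib]
  have hA : ∑ i ∈ Finset.range (j+1), (-1:ℤ)^(i+1) * (j.choose (i+1)) * (bell (M - (i+1)) : ℤ)
      = ∑ i ∈ Finset.range j, (-1:ℤ)^(i+1) * (j.choose (i+1)) * (bell (M - (i+1)) : ℤ) := by
    rw [Finset.sum_range_succ, Nat.choose_succ_self]
    simp
  have hddM : dd M j = ∑ i ∈ Finset.range j, (-1:ℤ)^(i+1) * (j.choose (i+1)) * (bell (M - (i+1)) : ℤ)
      + (bell M : ℤ) := by
    rw [dd, Finset.sum_range_succ' _ j]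
    simp
  have hddM1 : dd (M-1) j = ∑ i ∈ Finset.range (j+1), (-1:ℤ)^i * (j.choose i) * (bell (M - 1 - i) : ℤ) := by
    rw [dd]
  rw [hA, hddM, hddM1]
  simp
  ring

lemma Kident (m : ℕ) : ∀ t, t ≤ m →
    (bell m : ℤ) + ∑ s ∈ Finset.range t, dd m (m-1-s) = dd (m+1) (m-t) := by
  intro t
  induction t with
  | zero => intro _; simpa using (dd_key m).symm
  | succ t ih =>
    intro ht
    have h1 := ih (by omega)
    rw [Finset.sum_range_succ, ← add_assoc, h1]
    have h2 : m - t = (m - (t+1)) + 1 := by omega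
    rw [h2, dd_succ]
    have h3 : m + 1 - 1 = m := by omega
    have h4 : m - 1 - t = m - (t+1) := by omega
    rw [h3, h4]
    ring

end Arith

section Main

lemma sum_filter_lt (m t : ℕ) (ht : t ≤ m + 1) (g : ℕ → ℤ) (f : Fin (m+1) → ℤ)
    (hfg : ∀ j : Fin (m+1), (j:ℕ) < t → f j = g (j:ℕ)) :
    ∑ j ∈ Finset.univ.filter (fun j : Fin (m+1) => (j:ℕ) < t), f j
      = ∑ s ∈ Finset.range t, g s := by
  refine Finset.sum_nbij' (i := fun j => (j : ℕ))
    (j := fun s => (⟨s % (m+1), Nat.mod_lt _ (by omega)⟩ : Fin (m+1))) ?_ ?_ ?_ ?_ ?_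
  · intro j hj
    rw [Finset.mem_filter] at hj
    rw [Finset.mem_range]
    exact hj.2
  · intro s hs
    rw [Finset.mem_range] at hs
    rw [Finset.mem_filter]
    refine ⟨Finset.mem_univ _, ?_⟩
    show s % (m+1) < t
    rw [Nat.mod_eq_of_lt (by omega)]
    exact hs
  · intro j hj
    rw [Finset.mem_filter] at hj
    apply Fin.ext
    show (j : ℕ) % (m+1) = (j : ℕ)
    exact Nat.mod_eq_of_lt (by omega)
  · intro s hs
    rw [Finset.mem_range] at hs
    show s % (m+1) = s
    exact Nat.mod_eq_of_lt (by omega)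
  · intro j hj
    rw [Finset.mem_filter] at hj
    exact hfg j hj.2

lemma bell_zero : bell 0 = 1 := by
  rw [bell]
  rw [Nat.card_eq_one_iff_unique]
  constructor
  · constructor
    intro a b
    refine Setoid.ext fun x y => x.elim0
  · exact ⟨Setoid.ker (fun x : Fin 0 => x)⟩

lemma cnt_zero : cnt 0 (Fin.last 0) = 1 := by
  haveI : Subsingleton (Fin (0+1)) := ⟨fun a b => Fin.ext (by omega)⟩
  rw [cnt, Nat.card_eq_one_iff_unique]
  constructor
  · constructor
    intro a b
    refine Subtype.ext (Equiv.ext fun i => ?_)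
    exact Subsingleton.elim _ _
  · refine ⟨⟨1, ?_, ?_⟩⟩
    · rintro ⟨i, j, h, -⟩
      omega
    · rfl

theorem cnt_eq (m : ℕ) :
    cnt m (Fin.last m) = bell m ∧
    ∀ k : Fin (m+1), (k:ℕ) < m → (cnt m k : ℤ) = dd m (m - 1 - (k:ℕ)) := by
  induction m with
  | zero =>
    refine ⟨by rw [cnt_zero, bell_zero], fun k hk => absurd hk (Nat.not_lt_zero _)⟩
  | succ m ih =>
    obtain ⟨ih1, ih2⟩ := ih
    -- common computation: for t ≤ m, sum over {j < t} ∪ {last m}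
    have key : ∀ t : ℕ, t ≤ m →
        (∑ j ∈ Finset.univ.filter
            (fun j : Fin (m+1) => (j:ℕ) < t ∨ j = Fin.last m), (cnt m j : ℤ))
          = dd (m+1) (m - t) := by
      intro t ht
      have hsplit : Finset.univ.filter (fun j : Fin (m+1) => (j:ℕ) < t ∨ j = Fin.last m)
          = insert (Fin.last m) (Finset.univ.filter (fun j : Fin (m+1) => (j:ℕ) < t)) := by
        ext j
        simp only [Finset.mem_filter, Finset.mem_univ, true_and, Finset.mem_insert]
        tauto
      have hnot : Fin.last m ∉ Finset.univ.filter (fun j : Fin (m+1) => (j:ℕ) < t) := by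
        simp only [Finset.mem_filter, Finset.mem_univ, true_and, Fin.val_last]
        omega
      rw [hsplit, Finset.sum_insert hnot, ih1]
      rw [sum_filter_lt m t (by omega) (fun s => dd m (m - 1 - s))
        (fun j => (cnt m j : ℤ)) (fun j hj => ih2 j (by omega))]
      exact Kident m t ht
    constructor
    · -- last entry case
      have heq : (Finset.univ.filter
          (fun j : Fin (m+1) => (j:ℕ) < ((Fin.last (m+1) : Fin (m+2)):ℕ) ∨ j = Fin.last m))
          = Finset.univ := by
        refine Finset.filter_true_of_mem fun j _ => Or.inl ?_
        rw [Fin.val_last]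
        exact j.is_lt
      have h0 := cnt_succ m (Fin.last (m+1))
      rw [heq] at h0
      have hcast : (cnt (m+1) (Fin.last (m+1)) : ℤ) = (bell (m+1) : ℤ) := by
        rw [h0]
        push_cast
        rw [Fin.sum_univ_castSucc (fun j : Fin (m+1) => (cnt m j : ℤ))]
        have hterm : ∀ j : Fin m, (cnt m j.castSucc : ℤ) = dd m (m - 1 - (j:ℕ)) := by
          intro j
          have := ih2 j.castSucc (by simp)
          simpa using this
        rw [Finset.sum_congr rfl (fun j _ => hterm j)]
        rw [Fin.sum_univ_eq_sum_range (fun s => dd m (m - 1 - s)) m, ih1]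
        have hK := Kident m m le_rfl
        rw [Nat.sub_self, dd_zero] at hK
        rw [add_comm] at hK
        exact hK
      exact_mod_cast hcast
    · intro k hk
      have hk' : (k : ℕ) ≤ m := by omega
      have h0 := cnt_succ m k
      have hcast : (cnt (m+1) k : ℤ)
          = ∑ j ∈ Finset.univ.filter
              (fun j : Fin (m+1) => (j:ℕ) < (k:ℕ) ∨ j = Fin.last m), (cnt m j : ℤ) := by
        rw [h0]; push_cast; rfl
      rw [hcast, key (k:ℕ) hk']
      congr 1

end Main

theorem bell_distribution (n : ℕ) (hn : 1 ≤ n) :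
    Nat.card {π : Equiv.Perm (Fin n) // Avoids3d21 π ∧ π ⟨n - 1, by omega⟩ = ⟨n - 1, by omega⟩} = bell (n - 1) ∧
    ∀ k : ℕ, (hk1 : 1 ≤ k) → (hk2 : k ≤ n - 1) →
      (Nat.card {π : Equiv.Perm (Fin n) // Avoids3d21 π ∧ π ⟨n - 1, by omega⟩ = ⟨k - 1, by omega⟩} : ℤ) =
        ∑ i ∈ Finset.range (n - k), (-1 : ℤ) ^ i * (((n - k - 1)).choose i) * (bell (n - 1 - i) : ℤ) := by
  obtain ⟨m, rfl⟩ : ∃ m, n = m + 1 := ⟨n - 1, by omega⟩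
  constructor
  · have h := (cnt_eq m).1
    exact h
  · intro k hk1 hk2
    have hkm : k ≤ m := by omega
    have h := (cnt_eq m).2 ⟨k - 1, by omega⟩ (by simpa using by omega)
    have hL : (Nat.card {π : Equiv.Perm (Fin (m+1)) // Avoids3d21 π ∧
        π ⟨m + 1 - 1, by omega⟩ = ⟨k - 1, by omega⟩} : ℤ) = dd m (m - 1 - (k - 1)) := h
    rw [hL]
    have h1 : m - 1 - (k - 1) = m - k := by omega
    have h2 : m + 1 - k = (m - k) + 1 := by omega
    have h3 : m + 1 - k - 1 = m - k := by omega
    rw [h1, h3, h2, dd]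
    refine Finset.sum_congr rfl fun i hi => ?_
    rw [show m + 1 - 1 - i = m - i from by omega]
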